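/- Let G, V, Z be three distinct collinear points of ℝ² with G − Z = (5/4)(V − G), let P be a point not on line GZ, and define Q′ := G − (1/2)(P − G), P′ := 2Q′ − V, Q := midpoint(P, V). Let q(X) = B(X − Z, X − Z) + c (B a nonzero symmetric bilinear form, c ∈ ℝ) vanish at P, P′, Q, Q′, and let K(W) := G − (1/2)(W − G). Then P and P′ are the only points of the conic whose complement also lies on the conic: for every point R with q(R) = 0 and q(K(R)) = 0, one has R = P or R = P′. -/

import Mathlib

set_option maxHeartbeats 1000000 in
/-- In the configuration of Lemmas 3.1 and 3.2 (with `ZG/GV = 5/4`), the points `P`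
and `P′` are the only points of the conic whose complement `K(R) = G − ½(R − G)` also
lies on the conic. -/
theorem only_P_P'_have_complement_on_conic (G V Z : ℝ × ℝ)
    (hcol : Collinear ℝ ({G, V, Z} : Set (ℝ × ℝ)))
    (hGV : G ≠ V) (hVZ : V ≠ Z) (hGZ : G ≠ Z)
    (hratio : G - Z = (5/4 : ℝ) • (V - G))
    (P : ℝ × ℝ) (hP : P ∉ line[ℝ, G, Z])
    (Q' P' Q : ℝ × ℝ)
    (hQ' : Q' = G - (1/2 : ℝ) • (P - G))
    (hP' : P' = (2 : ℝ) • Q' - V)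
    (hQ : Q = midpoint ℝ P V)
    (B : (ℝ × ℝ) →ₗ[ℝ] (ℝ × ℝ) →ₗ[ℝ] ℝ) (c : ℝ)
    (hB : B ≠ 0) (hBsymm : ∀ u v, B u v = B v u)
    (hvanish : ∀ X ∈ ({P, P', Q, Q'} : Set (ℝ × ℝ)), B (X - Z) (X - Z) + c = 0) :
    ∀ R : ℝ × ℝ, B (R - Z) (R - Z) + c = 0 →
      B ((G - (1/2 : ℝ) • (R - G)) - Z) ((G - (1/2 : ℝ) • (R - G)) - Z) + c = 0 →
      R = P ∨ R = P' := by
  intro R hR1 hR2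
  set e : ℝ × ℝ := V - G with he_def
  set f : ℝ × ℝ := P - G with hf_def
  have hZ : Z = G - (5/4:ℝ) • e := by rw [← hratio]; abel
  have hPG : P = G + f := by rw [hf_def]; abel
  have hVG : V = G + e := by rw [he_def]; abel
  have he0 : e ≠ 0 := sub_ne_zero_of_ne (Ne.symm hGV)
  -- the determinant of (e, f) is nonzero, since P is not on line GZ
  have hD : e.1 * f.2 - e.2 * f.1 ≠ 0 := by
    intro hD0
    apply hP
    -- f = t • e for some t
    have hfe : ∃ t : ℝ, f = t • e := by
      by_cases h1 : e.1 = 0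
      · have h2 : e.2 ≠ 0 := fun h2 => he0 (Prod.ext h1 h2)
        refine ⟨f.2 / e.2, Prod.ext ?_ ?_⟩
        · show f.1 = f.2 / e.2 * e.1
          have hf1 : f.1 = 0 := by
            have h : e.2 * f.1 = 0 := by rw [h1] at hD0; linarith
            rcases mul_eq_zero.mp h with h' | h'
            · exact absurd h' h2
            · exact h'
          rw [h1, hf1, mul_zero]
        · show f.2 = f.2 / e.2 * e.2
          field_simp
      · refine ⟨f.1 / e.1, Prod.ext ?_ ?_⟩
        · show f.1 = f.1 / e.1 * e.1
          field_simp
        · show f.2 = f.1 / e.1 * e.2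
          field_simp
          linear_combination hD0
    obtain ⟨t, ht⟩ := hfe
    have hPt : P = ((4/5) * t + 1) • (G -ᵥ Z) +ᵥ Z := by
      show P = ((4/5) * t + 1) • (G - Z) + Z
      rw [hPG, ht, hZ]
      module
    rw [hPt]
    exact smul_vsub_rev_vadd_mem_affineSpan_pair _ _ _
  -- every vector is a combination of e and f
  have hspan : ∀ w : ℝ × ℝ, ∃ x y : ℝ, w = x • e + y • f := by
    intro w
    refine ⟨(w.1 * f.2 - w.2 * f.1) / (e.1 * f.2 - e.2 * f.1),
            (e.1 * w.2 - e.2 * w.1) / (e.1 * f.2 - e.2 * f.1), Prod.ext ?_ ?_⟩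
    · show w.1 = _ * e.1 + _ * f.1
      rw [div_mul_eq_mul_div, div_mul_eq_mul_div, ← add_div, eq_div_iff hD]
      ring
    · show w.2 = _ * e.2 + _ * f.2
      rw [div_mul_eq_mul_div, div_mul_eq_mul_div, ← add_div, eq_div_iff hD]
      ring
  -- bilinear expansion
  have hBexp : ∀ α β γ δ : ℝ, B (α • e + β • f) (γ • e + δ • f)
      = α * γ * B e e + α * δ * B e f + β * γ * B f e + β * δ * B f f := by
    intro α β γ δ
    simp only [map_add, map_smul, LinearMap.add_apply, LinearMap.smul_apply, smul_eq_mul]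
    ring
  have hfe' : B f e = B e f := hBsymm f e
  -- the four vanishing conditions as scalar equations
  have hPd : P - Z = (5/4:ℝ) • e + (1:ℝ) • f := by rw [hPG, hZ]; module
  have hP'G : P' = G + (-1:ℝ) • e + (-1:ℝ) • f := by rw [hP', hQ', hVG, hf_def]; module
  have hP'd : P' - Z = (1/4:ℝ) • e + (-1:ℝ) • f := by rw [hP'G, hZ]; module
  have hQd : Q - Z = (7/4:ℝ) • e + (1/2:ℝ) • f := by
    rw [hQ, midpoint_eq_smul_add, hPG, hVG, hZ]
    match_scalars <;> norm_num
  have hQ'd : Q' - Z = (5/4:ℝ) • e + (-1/2:ℝ) • f := by rw [hQ', hZ, hf_def]; module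
  have E1 := hvanish P (by simp)
  have E2 := hvanish P' (by simp)
  have E3 := hvanish Q (by simp)
  have E4 := hvanish Q' (by simp)
  rw [hPd, hBexp] at E1
  rw [hP'd, hBexp] at E2
  rw [hQd, hBexp] at E3
  rw [hQ'd, hBexp] at E4
  -- solve the linear system for B e f, B f f, c in terms of a = B e e
  have hb : B e f = -(1/2) * B e e := by rw [hfe'] at E1 E2; linarith
  have hd : B f f = (5/2) * B e e := by rw [hfe'] at E1 E4; linarith
  have hc : c = -(45/16) * B e e := by rw [hfe'] at E2; linarith
  -- a ≠ 0, else B = 0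
  have ha : B e e ≠ 0 := by
    intro ha0
    apply hB
    apply LinearMap.ext; intro u; apply LinearMap.ext; intro v
    obtain ⟨x1, y1, hu⟩ := hspan u
    obtain ⟨x2, y2, hv⟩ := hspan v
    rw [hu, hv, hBexp, hfe', hb, hd, ha0]
    simp
  -- decompose R
  obtain ⟨x, y, hRw⟩ := hspan (R - G)
  have hRd : R = G + (x • e + y • f) := by rw [← hRw]; abel
  have hR1d : R - Z = (x + 5/4) • e + y • f := by rw [hRd, hZ]; module
  have hR2d : (G - (1/2:ℝ) • (R - G)) - Z = (5/4 - x/2) • e + (-y/2) • f := by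
    rw [hRd, hZ]; module
  rw [hR1d, hBexp, hfe', hb, hd, hc] at hR1
  rw [hR2d, hBexp, hfe', hb, hd, hc] at hR2
  -- extract the polynomial conditions on (x, y)
  have key1 : x^2 + (5/2)*x - x*y - (5/4)*y + (5/2)*y^2 - 5/4 = 0 := by
    have h : B e e * (x^2 + (5/2)*x - x*y - (5/4)*y + (5/2)*y^2 - 5/4) = 0 := by
      linear_combination hR1
    exact (mul_eq_zero.mp h).resolve_left ha
  have key2 : x^2 - 5*x - x*y + (5/2)*y + (5/2)*y^2 - 5 = 0 := by
    have h : B e e * (x^2 - 5*x - x*y + (5/2)*y + (5/2)*y^2 - 5) = 0 := by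
      linear_combination (4:ℝ) * hR2
    exact (mul_eq_zero.mp h).resolve_left ha
  have hy : y = 2*x + 1 := by linear_combination (-4/15) * key1 + (4/15) * key2
  subst hy
  have hx : x * (x + 1) = 0 := by linear_combination (1/9) * key1
  rcases mul_eq_zero.mp hx with hx0 | hx1
  · left
    subst hx0
    rw [hRd, hPG]
    module
  · right
    have hx' : x = -1 := by linarith
    subst hx'
    rw [hRd, hP'G]
    module
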